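/- Let B be an n×n nonsingular upper triangular nonnegative integer matrix in Hermite normal form (each off-diagonal entry B_{ij} with i < j satisfies 0 ≤ B_{ij} < B_{jj}), and suppose the diagonal entries B_{11},...,B_{rr} equal 1 and B_{jj} ≥ 2 for j > r. Then the abelian group ℤⁿ/(column lattice of B) is 2-torsion (every element has order dividing 2) if and only if the lower-right (n-r)×(n-r) block of B equals 2 times the identity matrix. -/
import Mathlib


/-- Proposition 3.1: For `B` nonsingular, upper triangular, in Hermite
normal form with diagonal entries `1` in the first `r` columns and `≥ 2` afterwards,
the quotient `ℤⁿ/(column lattice of B)` is 2-torsion iff the lower-right block of `B`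
is `2·I`. -/
theorem stmt3 (n r : ℕ) (hr : r ≤ n) (B : Matrix (Fin n) (Fin n) ℤ)
    (hdet : B.det ≠ 0)
    (htri : ∀ i j : Fin n, j < i → B i j = 0)
    (hnonneg : ∀ i j : Fin n, 0 ≤ B i j)
    (hHNF : ∀ i j : Fin n, i < j → B i j < B j j)
    (hdiag1 : ∀ j : Fin n, (j : ℕ) < r → B j j = 1)
    (hdiag2 : ∀ j : Fin n, r ≤ (j : ℕ) → 2 ≤ B j j) :
    (∀ x : Fin n → ℤ, ∃ y : Fin n → ℤ, (2 : ℤ) • x = B.mulVec y) ↔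
      (∀ i j : Fin n, r ≤ (i : ℕ) → r ≤ (j : ℕ) →
        B i j = if i = j then 2 else 0) := by
  have hBpos : ∀ k : Fin n, 1 ≤ B k k := by
    intro k
    rcases lt_or_ge (k : ℕ) r with h | h
    · exact le_of_eq (hdiag1 k h).symm
    · linarith [hdiag2 k h]
  have colunit : ∀ i l : Fin n, (l : ℕ) < r → B i l = if i = l then 1 else 0 := by
    intro i l hl
    rcases lt_trichotomy i l with h | h | h
    · rw [if_neg (ne_of_lt h)]
      have h1 := hHNF i l h
      have h2 := hnonneg i l
      rw [hdiag1 l hl] at h1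
      omega
    · rw [if_pos h, h]
      exact hdiag1 l hl
    · rw [if_neg (ne_of_gt h)]
      exact htri i l h
  constructor
  · intro H
    -- key lemma for each column j with r ≤ j
    have key : ∀ j : Fin n, r ≤ (j : ℕ) →
        B j j = 2 ∧ ∀ i : Fin n, r ≤ (i : ℕ) → i < j → B i j = 0 := by
      intro j hj
      obtain ⟨y, hy⟩ := H (fun k => if k = j then 1 else 0)
      have row : ∀ k : Fin n, ∑ l, B k l * y l = if k = j then 2 else 0 := by
        intro k
        have hk := congrFun hy k
        simp only [Pi.smul_apply, smul_eq_mul, Matrix.mulVec, dotProduct] at hk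
        rw [← hk]
        split <;> ring
      -- claim 1: y k = 0 for k > j
      have claim1 : ∀ k : Fin n, j < k → y k = 0 := by
        suffices h : ∀ m : ℕ, ∀ k : Fin n, n - (k : ℕ) ≤ m → j < k → y k = 0 by
          intro k hk
          exact h n k (by omega) hk
        intro m
        induction m with
        | zero => intro k hk _; have := k.isLt; omega
        | succ m ih =>
          intro k hk hjk
          have hrow := row k
          rw [if_neg (by exact fun h => absurd h (ne_of_gt hjk))] at hrow
          have hsum : ∑ l, B k l * y l = B k k * y k := by
            apply Finset.sum_eq_single
            · intro l _ hlk
              rcases lt_or_gt_of_ne hlk with h | h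
              · rw [htri k l h, zero_mul]
              · have hl := k.isLt
                rw [ih l (by have := Fin.lt_iff_val_lt_val.mp h; omega)
                  (lt_trans hjk h), mul_zero]
            · intro h; exact absurd (Finset.mem_univ k) h
          rw [hsum] at hrow
          rcases mul_eq_zero.mp hrow with h | h
          · exact absurd h (by have := hBpos k; intro h; omega)
          · exact h
      -- claim 2: B j j = 2 and y j = 1
      have rowj : B j j * y j = 2 := by
        have hrow := row j
        rw [if_pos rfl] at hrow
        rw [← hrow]
        symm
        apply Finset.sum_eq_single
        · intro l _ hlj
          rcases lt_or_gt_of_ne hlj with h | h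
          · rw [htri j l h, zero_mul]
          · rw [claim1 l h, mul_zero]
        · intro h; exact absurd (Finset.mem_univ j) h
      have hBjj : B j j = 2 ∧ y j = 1 := by
        have h2 := hdiag2 j hj
        have hyj : 1 ≤ y j := by nlinarith
        constructor
        · nlinarith
        · nlinarith
      refine ⟨hBjj.1, ?_⟩
      -- claim 3: downward induction for r ≤ i < j
      have claim3 : ∀ m : ℕ, ∀ k : Fin n, r ≤ (k : ℕ) → k < j → (j : ℕ) - (k : ℕ) ≤ m →
          y k = 0 ∧ B k j = 0 := by
        intro m
        induction m with
        | zero =>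
          intro k _ hkj hm
          have := Fin.lt_iff_val_lt_val.mp hkj
          omega
        | succ m ih =>
          intro k hrk hkj hm
          have hrow := row k
          rw [if_neg (ne_of_lt hkj)] at hrow
          have hsum : ∑ l, B k l * y l = B k k * y k + B k j * y j := by
            rw [Finset.sum_eq_add_of_mem k j (Finset.mem_univ k) (Finset.mem_univ j)
              (ne_of_lt hkj)]
            intro l _ ⟨hlk, hlj⟩
            rcases lt_or_gt_of_ne hlk with h | h
            · rw [htri k l h, zero_mul]
            · rcases lt_trichotomy l j with h2 | h2 | h2
              · have hkl := Fin.lt_iff_val_lt_val.mp h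
                have hlj2 := Fin.lt_iff_val_lt_val.mp h2
                rw [(ih l (by omega) h2 (by omega)).1, mul_zero]
              · exact absurd h2 hlj
              · rw [claim1 l h2, mul_zero]
          rw [hsum, hBjj.2, mul_one] at hrow
          have hb1 := hnonneg k j
          have hb2 := hHNF k j hkj
          rw [hBjj.1] at hb2
          have hkk := hdiag2 k hrk
          have hyk : y k = 0 := by
            rcases lt_trichotomy (y k) 0 with h | h | h
            · have h1 : y k ≤ -1 := by omega
              nlinarith
            · exact h
            · have h1 : 1 ≤ y k := by omega
              nlinarith
          rw [hyk, mul_zero, zero_add] at hrow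
          exact ⟨hyk, hrow⟩
      intro i hi hij
      have := Fin.lt_iff_val_lt_val.mp hij
      exact (claim3 ((j : ℕ) - (i : ℕ)) i hi hij (le_refl _)).2
    intro i j hi hj
    rcases lt_trichotomy i j with h | h | h
    · rw [if_neg (ne_of_lt h)]
      exact (key j hj).2 i hi h
    · rw [if_pos h, h]
      exact (key j hj).1
    · rw [if_neg (ne_of_gt h)]
      exact htri i j h
  · intro H x
    refine ⟨fun k => if (k : ℕ) < r then
        2 * x k - ∑ l ∈ Finset.univ.filter (fun l : Fin n => ¬ (l : ℕ) < r), B k l * x l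
      else x k, ?_⟩
    funext i
    simp only [Pi.smul_apply, smul_eq_mul, Matrix.mulVec, dotProduct]
    rw [← Finset.sum_filter_add_sum_filter_not Finset.univ (fun l : Fin n => (l : ℕ) < r)]
    rcases lt_or_ge (i : ℕ) r with hi | hi
    · -- i < r
      have h1 : ∑ l ∈ Finset.univ.filter (fun l : Fin n => (l : ℕ) < r),
          B i l * (if (l : ℕ) < r then
            2 * x l - ∑ l' ∈ Finset.univ.filter (fun l' : Fin n => ¬ (l' : ℕ) < r), B l l' * x l'
          else x l) =
          2 * x i - ∑ l' ∈ Finset.univ.filter (fun l' : Fin n => ¬ (l' : ℕ) < r), B i l' * x l' := by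
        rw [Finset.sum_eq_single_of_mem i (by simp [hi])]
        · rw [colunit i i hi, if_pos rfl, if_pos hi, one_mul]
        · intro l hl hli
          rw [colunit i l (by simpa using hl), if_neg (fun h => hli h.symm), zero_mul]
      have h2 : ∑ l ∈ Finset.univ.filter (fun l : Fin n => ¬ (l : ℕ) < r),
          B i l * (if (l : ℕ) < r then
            2 * x l - ∑ l' ∈ Finset.univ.filter (fun l' : Fin n => ¬ (l' : ℕ) < r), B l l' * x l'
          else x l) =
          ∑ l' ∈ Finset.univ.filter (fun l' : Fin n => ¬ (l' : ℕ) < r), B i l' * x l' := by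
        apply Finset.sum_congr rfl
        intro l hl
        rw [if_neg (by simpa using hl)]
      rw [h1, h2]
      ring
    · -- r ≤ i
      have h1 : ∑ l ∈ Finset.univ.filter (fun l : Fin n => (l : ℕ) < r),
          B i l * (if (l : ℕ) < r then
            2 * x l - ∑ l' ∈ Finset.univ.filter (fun l' : Fin n => ¬ (l' : ℕ) < r), B l l' * x l'
          else x l) = 0 := by
        apply Finset.sum_eq_zero
        intro l hl
        have hlr : (l : ℕ) < r := by simpa using hl
        rw [htri i l (Fin.lt_iff_val_lt_val.mpr (by omega)), zero_mul]
      have h2 : ∑ l ∈ Finset.univ.filter (fun l : Fin n => ¬ (l : ℕ) < r),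
          B i l * (if (l : ℕ) < r then
            2 * x l - ∑ l' ∈ Finset.univ.filter (fun l' : Fin n => ¬ (l' : ℕ) < r), B l l' * x l'
          else x l) = 2 * x i := by
        rw [Finset.sum_eq_single_of_mem i (by simp [hi])]
        · rw [H i i hi hi, if_pos rfl, if_neg (by omega)]
        · intro l hl hli
          have hlr : r ≤ (l : ℕ) := by simpa using hl
          rw [H i l hi hlr, if_neg (fun h => hli (h.symm)), zero_mul]
      rw [h1, h2, zero_add]
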